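/- Let π ∈ C_m ≀ S_n be a generalized permutation with π(n) ≠ ω^{m-1} (i.e., it is not the case that |π(n)| = 1 and its phase is ω^{m-1}). Define maj_{m,n}(π) := m·maj(π) + Σ_{i=1}^n Log_ω π(i), where maj is computed with respect to the order 1·ω^{m-1} < ... < n·ω^{m-1} < ... < 1 < ... < n and Log_ω π(i) ∈ {0,...,m-1} is the phase exponent. Then maj_{m,n}(t_{n-1} π) = maj_{m,n}(π) + 1, where t_{n-1} is the generalized permutation with t_{n-1}(i) = i-1 for i ≠ 1 and t_{n-1}(1) = ω·n. -/

import Mathlib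

open Finset

@[ext]
structure GenPerm (m n : ℕ) where
  σ : Equiv.Perm (Fin n)
  c : Fin n → ZMod m
deriving DecidableEq

namespace GenPerm

variable {m n : ℕ}

instance [NeZero m] : Fintype (GenPerm m n) :=
  Fintype.ofEquiv (Equiv.Perm (Fin n) × (Fin n → ZMod m))
    { toFun := fun p => ⟨p.1, p.2⟩
      invFun := fun g => (g.σ, g.c)
      left_inv := fun p => rfl
      right_inv := fun g => rfl }

instance : Mul (GenPerm m n) := ⟨fun g h => ⟨g.σ * h.σ, fun j => g.c (h.σ j) + h.c j⟩⟩
instance : One (GenPerm m n) := ⟨⟨1, 0⟩⟩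
instance : Inv (GenPerm m n) := ⟨fun g => ⟨g.σ⁻¹, fun j => - g.c (g.σ⁻¹ j)⟩⟩

@[simp] lemma mul_σ (g h : GenPerm m n) : (g * h).σ = g.σ * h.σ := rfl
@[simp] lemma mul_c (g h : GenPerm m n) (j : Fin n) : (g * h).c j = g.c (h.σ j) + h.c j := rfl
@[simp] lemma one_σ : (1 : GenPerm m n).σ = 1 := rfl
@[simp] lemma one_c (j : Fin n) : (1 : GenPerm m n).c j = 0 := rfl
@[simp] lemma inv_σ (g : GenPerm m n) : (g⁻¹).σ = g.σ⁻¹ := rfl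
@[simp] lemma inv_c (g : GenPerm m n) (j : Fin n) : (g⁻¹).c j = - g.c (g.σ⁻¹ j) := rfl

instance : Group (GenPerm m n) where
  mul_assoc a b c := by
    ext j
    · simp [mul_assoc]
    · simp [add_assoc]
  one_mul a := by
    ext j
    · simp
    · simp
  mul_one a := by
    ext j
    · simp
    · simp
  inv_mul_cancel a := by
    ext j
    · simp
    · simp

/-- The generator `s i`: `s 0` multiplies the first letter's phase by `ω`;
for `1 ≤ i < n`, `s i` swaps positions `i` and `i+1` (1-indexed), i.e. `i-1` and `i`
(0-indexed). -/
def s (i : ℕ) : GenPerm m n :=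
  if h : i < n then
    if h0 : i = 0 then ⟨1, fun j => if j = ⟨0, by omega⟩ then 1 else 0⟩
    else ⟨Equiv.swap ⟨i - 1, by omega⟩ ⟨i, h⟩, 0⟩
  else 1

/-- `t i = s i * s (i-1) * ⋯ * s 1 * s 0`. -/
def t (i : ℕ) : GenPerm m n := ((List.range (i + 1)).map (fun j => (s (i - j) : GenPerm m n))).prod

/-- `rep k = t (n-1) ^ k (n-1) * ⋯ * t 0 ^ k 0`. -/
def rep (k : Fin n → ℕ) : GenPerm m n :=
  (List.ofFn (fun i : Fin n => (t (i : ℕ) : GenPerm m n) ^ k i)).reverse.prod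

open scoped Classical in
/-- The flag major index: the sum of the exponents in the canonical representation
`π = t (n-1) ^ k (n-1) * ⋯ * t 0 ^ k 0` with `0 ≤ k i < m * (i+1)`. -/
noncomputable def flagMajor (π : GenPerm m n) : ℕ :=
  if h : ∃ k : Fin n → ℕ, (∀ i : Fin n, k i < m * ((i : ℕ) + 1)) ∧ π = rep k
  then ∑ i, h.choose i else 0

/-- The major index of a generalized permutation with respect to the linear order
`1·ω^{m-1} < ⋯ < n·ω^{m-1} < ⋯ < 1·ω < ⋯ < n·ω < 1 < ⋯ < n`
(a 1-indexed descent at position `i` contributes `i`). -/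
def majG (π : GenPerm m n) : ℕ :=
  ∑ i ∈ Finset.range n, if h : i + 1 < n then
    (if (π.c ⟨i, by omega⟩).val < (π.c ⟨i + 1, h⟩).val ∨
        (π.c ⟨i, by omega⟩ = π.c ⟨i + 1, h⟩ ∧ π.σ ⟨i + 1, h⟩ < π.σ ⟨i, by omega⟩)
     then i + 1 else 0) else 0

/-- Coxeter length with respect to the generators `s 0, s 1, …, s (n-1)`. -/
noncomputable def len (π : GenPerm m n) : ℕ :=
  sInf {l | ∃ w : List (Fin n), w.length = l ∧ (w.map (fun i => (s (i : ℕ) : GenPerm m n))).prod = π}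



private lemma rot_val {n : ℕ} (hn : 0 < n) (x : Fin n) :
    (((finRotate n)⁻¹ x : Fin n) : ℕ) = if (x : ℕ) = 0 then n - 1 else (x : ℕ) - 1 := by
  obtain ⟨k, rfl⟩ : ∃ k, n = k + 1 := ⟨n - 1, by omega⟩
  have h : (finRotate (k + 1))⁻¹ x = x - 1 := by
    rw [Equiv.Perm.inv_def, Equiv.symm_apply_eq, finRotate_succ_apply, sub_add_cancel]
  rw [h, Fin.coe_sub_one]
  by_cases hx : (x : ℕ) = 0
  · rw [if_pos (Fin.ext hx), if_pos hx]; rfl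
  · rw [if_neg (fun h => hx (by rw [h]; rfl)), if_neg hx]

/-- The element `t_{n-1}`: as a generalized permutation, `t_{n-1}(i) = i - 1` for
`i ≠ 1` and `t_{n-1}(1) = ω · n`. -/
def tTop {m n : ℕ} : GenPerm m n :=
  ⟨(finRotate n)⁻¹, fun j => if (j : ℕ) = 0 then 1 else 0⟩

/-- `maj_{m,n}(π) = m · maj(π) + Σ_i Log_ω π(i)`. -/
def majmn {m n : ℕ} (π : GenPerm m n) : ℕ :=
  m * majG π + ∑ i : Fin n, (π.c i).val

/-- Lemma 3.2: if `π(n) ≠ ω^{m-1}` then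
`maj_{m,n}(t_{n-1} π) = maj_{m,n}(π) + 1`. -/
theorem majmn_tTop_mul (m n : ℕ) (hm : 0 < m) (hn : 0 < n) (π : GenPerm m n)
    (hπ : ¬(π.σ ⟨n - 1, by omega⟩ = ⟨0, hn⟩ ∧ (π.c ⟨n - 1, by omega⟩).val = m - 1)) :
    majmn (tTop * π) = majmn π + 1 := by
  haveI : NeZero m := ⟨hm.ne'⟩
  set π' := tTop * π with hπ'def
  set j0 : Fin n := π.σ⁻¹ ⟨0, hn⟩ with hj0def
  have hσj0 : π.σ j0 = ⟨0, hn⟩ := π.σ.apply_symm_apply _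
  have hkey : ∀ j : Fin n, (π.σ j : ℕ) = 0 ↔ j = j0 := by
    intro j
    constructor
    · intro h
      apply π.σ.injective
      rw [hσj0]
      exact Fin.ext h
    · rintro rfl
      rw [hσj0]
  have hkey' : ∀ (i : ℕ) (h : i < n), (π.σ ⟨i, h⟩ : ℕ) = 0 ↔ i = (j0 : ℕ) := by
    intro i h
    rw [hkey ⟨i, h⟩]
    simp [Fin.ext_iff]
  have hc' : ∀ j : Fin n, π'.c j = (if (π.σ j : ℕ) = 0 then (1 : ZMod m) else 0) + π.c j := by
    intro j; rfl
  have hs' : ∀ j : Fin n, (π'.σ j : ℕ) = if (π.σ j : ℕ) = 0 then n - 1 else (π.σ j : ℕ) - 1 := by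
    intro j
    exact rot_val hn (π.σ j)
  have hceq : ∀ a b : ZMod m, (a = b) ↔ (a.val = b.val) :=
    fun a b => ⟨fun h => by rw [h], fun h => ZMod.val_injective m h⟩
  have hcv : ∀ j : Fin n, (π'.c j).val =
      if (π.σ j : ℕ) = 0 then ((π.c j).val + 1) % m else (π.c j).val := by
    intro j
    rw [hc' j]
    by_cases h : (π.σ j : ℕ) = 0
    · rw [if_pos h, if_pos h, ZMod.val_add, ZMod.val_one_eq_one_mod, Nat.mod_add_mod,
        Nat.add_comm]
    · rw [if_neg h, if_neg h, zero_add]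
  have hjlt : (j0 : ℕ) < n := j0.isLt
  have hsumc : (∑ i : Fin n, (π'.c i).val) + (π.c j0).val
      = (∑ i : Fin n, (π.c i).val) + ((π.c j0).val + 1) % m := by
    rw [← Finset.add_sum_erase _ _ (Finset.mem_univ j0),
      ← Finset.add_sum_erase _ _ (Finset.mem_univ j0)]
    have h1 : ∀ i ∈ Finset.univ.erase j0, (π'.c i).val = (π.c i).val := by
      intro i hi
      rw [hcv i, if_neg]
      intro h
      exact (Finset.mem_erase.mp hi).1 ((hkey i).mp h)
    rw [Finset.sum_congr rfl h1, hcv j0, if_pos ((hkey j0).mpr rfl)]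
    ring
  have hmajG : ∀ ρ : GenPerm m n, majG ρ = ∑ i ∈ Finset.range n,
      (if h : i + 1 < n then
        (if (ρ.c ⟨i, Nat.lt_of_succ_lt h⟩).val < (ρ.c ⟨i + 1, h⟩).val ∨
            (ρ.c ⟨i, Nat.lt_of_succ_lt h⟩ = ρ.c ⟨i + 1, h⟩ ∧
              ρ.σ ⟨i + 1, h⟩ < ρ.σ ⟨i, Nat.lt_of_succ_lt h⟩)
          then i + 1 else 0) else 0) := fun ρ => rfl
  by_cases hB : (π.c j0).val = m - 1
  -- Case B : the phase at position j0 is ω^(m-1)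
  · have hj0n : (j0 : ℕ) ≠ n - 1 := by
      intro h
      apply hπ
      have e : (⟨n - 1, by omega⟩ : Fin n) = j0 := Fin.ext h.symm
      constructor
      · rw [e, hσj0]
      · rw [e]; exact hB
    have hj1 : (j0 : ℕ) + 1 < n := by omega
    have hmod : ((π.c j0).val + 1) % m = 0 := by
      rw [hB, Nat.sub_add_cancel hm, Nat.mod_self]
    have hG : majG π' = majG π + 1 := by
      rw [hmajG π', hmajG π]
      have step : ∑ i ∈ Finset.range n,
          ((if h : i + 1 < n then
            (if (π'.c ⟨i, Nat.lt_of_succ_lt h⟩).val < (π'.c ⟨i + 1, h⟩).val ∨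
                (π'.c ⟨i, Nat.lt_of_succ_lt h⟩ = π'.c ⟨i + 1, h⟩ ∧
                  π'.σ ⟨i + 1, h⟩ < π'.σ ⟨i, Nat.lt_of_succ_lt h⟩)
              then i + 1 else 0) else 0)
            + (if i = (j0 : ℕ) - 1 ∧ 1 ≤ (j0 : ℕ) then (j0 : ℕ) else 0))
          = ∑ i ∈ Finset.range n,
          ((if h : i + 1 < n then
            (if (π.c ⟨i, Nat.lt_of_succ_lt h⟩).val < (π.c ⟨i + 1, h⟩).val ∨
                (π.c ⟨i, Nat.lt_of_succ_lt h⟩ = π.c ⟨i + 1, h⟩ ∧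
                  π.σ ⟨i + 1, h⟩ < π.σ ⟨i, Nat.lt_of_succ_lt h⟩)
              then i + 1 else 0) else 0)
            + (if i = (j0 : ℕ) then (j0 : ℕ) + 1 else 0)) := by
        refine Finset.sum_congr rfl ?_
        intro i hi
        rw [Finset.mem_range] at hi
        by_cases h1 : i + 1 < n
        · rw [dif_pos h1, dif_pos h1]
          simp only [Fin.lt_def, hceq, hcv, hs']
          by_cases hia : i = (j0 : ℕ)
          · have e : (⟨i, Nat.lt_of_succ_lt h1⟩ : Fin n) = j0 := Fin.ext hia
            rw [e]
            have hA0 : (π.σ j0 : ℕ) = 0 := by rw [hσj0]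
            have hB0 : ¬ ((π.σ ⟨i + 1, h1⟩ : Fin n) : ℕ) = 0 := by
              rw [hkey' (i + 1) h1]; omega
            simp only [if_pos hA0, if_neg hB0, hmod]
            have hvb := ZMod.val_lt (π.c ⟨i + 1, h1⟩)
            have hsb := (π.σ (⟨i + 1, h1⟩ : Fin n)).isLt
            rw [if_pos (by omega : (0 : ℕ) < (π.c ⟨i + 1, h1⟩).val ∨
              (0 = (π.c ⟨i + 1, h1⟩).val ∧
                ((π.σ ⟨i + 1, h1⟩ : Fin n) : ℕ) - 1 < n - 1))]
            rw [if_neg (by omega : ¬ ((π.c j0).val < (π.c ⟨i + 1, h1⟩).val ∨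
              ((π.c j0).val = (π.c ⟨i + 1, h1⟩).val ∧
                ((π.σ ⟨i + 1, h1⟩ : Fin n) : ℕ) < (π.σ j0 : ℕ))))]
            rw [if_neg (by omega : ¬ (i = (j0 : ℕ) - 1 ∧ 1 ≤ (j0 : ℕ))),
              if_pos hia]
            omega
          · by_cases hib : i + 1 = (j0 : ℕ)
            · have e : (⟨i + 1, h1⟩ : Fin n) = j0 := Fin.ext hib
              rw [e]
              have hB0 : (π.σ j0 : ℕ) = 0 := by rw [hσj0]
              have hA0 : ¬ ((π.σ ⟨i, Nat.lt_of_succ_lt h1⟩ : Fin n) : ℕ) = 0 := by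
                rw [hkey' i (Nat.lt_of_succ_lt h1)]; omega
              simp only [if_pos hB0, if_neg hA0, hmod]
              have hva := ZMod.val_lt (π.c ⟨i, Nat.lt_of_succ_lt h1⟩)
              have hsa := (π.σ (⟨i, Nat.lt_of_succ_lt h1⟩ : Fin n)).isLt
              rw [if_neg (by omega : ¬ ((π.c ⟨i, Nat.lt_of_succ_lt h1⟩).val < 0 ∨
                ((π.c ⟨i, Nat.lt_of_succ_lt h1⟩).val = 0 ∧
                  n - 1 < ((π.σ ⟨i, Nat.lt_of_succ_lt h1⟩ : Fin n) : ℕ) - 1)))]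
              rw [if_pos (by omega : (π.c ⟨i, Nat.lt_of_succ_lt h1⟩).val < (π.c j0).val ∨
                ((π.c ⟨i, Nat.lt_of_succ_lt h1⟩).val = (π.c j0).val ∧
                  (π.σ j0 : ℕ) < ((π.σ ⟨i, Nat.lt_of_succ_lt h1⟩ : Fin n) : ℕ)))]
              rw [if_pos (by omega : i = (j0 : ℕ) - 1 ∧ 1 ≤ (j0 : ℕ)),
                if_neg (by omega : ¬ i = (j0 : ℕ))]
              omega
            · have hA0 : ¬ ((π.σ ⟨i, Nat.lt_of_succ_lt h1⟩ : Fin n) : ℕ) = 0 := by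
                rw [hkey' i (Nat.lt_of_succ_lt h1)]; omega
              have hB0 : ¬ ((π.σ ⟨i + 1, h1⟩ : Fin n) : ℕ) = 0 := by
                rw [hkey' (i + 1) h1]; omega
              simp only [if_neg hA0, if_neg hB0]
              rw [if_neg (by omega : ¬ (i = (j0 : ℕ) - 1 ∧ 1 ≤ (j0 : ℕ))),
                if_neg (by omega : ¬ i = (j0 : ℕ))]
              congr 1
              refine if_congr ?_ rfl rfl
              constructor
              · rintro (h | ⟨h, h2⟩)
                · exact Or.inl h
                · exact Or.inr ⟨h, by omega⟩
              · rintro (h | ⟨h, h2⟩)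
                · exact Or.inl h
                · exact Or.inr ⟨h, by omega⟩
        · rw [dif_neg h1, dif_neg h1]
          rw [if_neg (by omega : ¬ (i = (j0 : ℕ) - 1 ∧ 1 ≤ (j0 : ℕ))),
            if_neg (by omega : ¬ i = (j0 : ℕ))]
      rw [Finset.sum_add_distrib, Finset.sum_add_distrib] at step
      have hh : ∑ i ∈ Finset.range n, (if i = (j0 : ℕ) then (j0 : ℕ) + 1 else 0)
          = (j0 : ℕ) + 1 := by
        rw [Finset.sum_ite_eq' (Finset.range n) ((j0 : ℕ)) (fun _ => (j0 : ℕ) + 1),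
          if_pos (Finset.mem_range.mpr hjlt)]
      by_cases hz : (j0 : ℕ) = 0
      · have hg : ∑ i ∈ Finset.range n,
            (if i = (j0 : ℕ) - 1 ∧ 1 ≤ (j0 : ℕ) then (j0 : ℕ) else 0) = 0 := by
          refine Finset.sum_eq_zero ?_
          intro i _
          rw [if_neg (by omega)]
        rw [hh, hg] at step
        omega
      · have hg : ∑ i ∈ Finset.range n,
            (if i = (j0 : ℕ) - 1 ∧ 1 ≤ (j0 : ℕ) then (j0 : ℕ) else 0) = (j0 : ℕ) := by
          have : ∀ i : ℕ, (i = (j0 : ℕ) - 1 ∧ 1 ≤ (j0 : ℕ)) ↔ i = (j0 : ℕ) - 1 :=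
            fun i => and_iff_left (by omega)
          simp only [this]
          rw [Finset.sum_ite_eq' (Finset.range n) ((j0 : ℕ) - 1) (fun _ => (j0 : ℕ)),
            if_pos (Finset.mem_range.mpr (by omega))]
        rw [hh, hg] at step
        omega
    have hmul : m * majG π' = m * majG π + m := by
      rw [hG, Nat.mul_add, Nat.mul_one]
    simp only [majmn]
    omega
  -- Case A : the phase at position j0 is not ω^(m-1)
  · have hvj0 := ZMod.val_lt (π.c j0)
    have hmod : ((π.c j0).val + 1) % m = (π.c j0).val + 1 :=
      Nat.mod_eq_of_lt (by omega)
    have hG : majG π' = majG π := by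
      rw [hmajG π', hmajG π]
      refine Finset.sum_congr rfl ?_
      intro i hi
      rw [Finset.mem_range] at hi
      by_cases h1 : i + 1 < n
      · rw [dif_pos h1, dif_pos h1]
        simp only [Fin.lt_def, hceq, hcv, hs']
        by_cases hia : i = (j0 : ℕ)
        · have e : (⟨i, Nat.lt_of_succ_lt h1⟩ : Fin n) = j0 := Fin.ext hia
          rw [e]
          have hA0 : (π.σ j0 : ℕ) = 0 := by rw [hσj0]
          have hB0 : ¬ ((π.σ ⟨i + 1, h1⟩ : Fin n) : ℕ) = 0 := by
            rw [hkey' (i + 1) h1]; omega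
          simp only [if_pos hA0, if_neg hB0, hmod]
          have hvb := ZMod.val_lt (π.c ⟨i + 1, h1⟩)
          have hsb := (π.σ (⟨i + 1, h1⟩ : Fin n)).isLt
          refine if_congr ?_ rfl rfl
          constructor
          · rintro (h | ⟨h, h2⟩)
            · exact Or.inl (by omega)
            · exact Or.inl (by omega)
          · rintro (h | ⟨h, h2⟩)
            · by_cases hlt : (π.c j0).val + 1 < (π.c ⟨i + 1, h1⟩).val
              · exact Or.inl hlt
              · exact Or.inr ⟨by omega, by omega⟩
            · omega
        · by_cases hib : i + 1 = (j0 : ℕ)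
          · have e : (⟨i + 1, h1⟩ : Fin n) = j0 := Fin.ext hib
            rw [e]
            have hB0 : (π.σ j0 : ℕ) = 0 := by rw [hσj0]
            have hA0 : ¬ ((π.σ ⟨i, Nat.lt_of_succ_lt h1⟩ : Fin n) : ℕ) = 0 := by
              rw [hkey' i (Nat.lt_of_succ_lt h1)]; omega
            simp only [if_pos hB0, if_neg hA0, hmod]
            have hva := ZMod.val_lt (π.c ⟨i, Nat.lt_of_succ_lt h1⟩)
            have hsa := (π.σ (⟨i, Nat.lt_of_succ_lt h1⟩ : Fin n)).isLt
            refine if_congr ?_ rfl rfl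
            constructor
            · rintro (h | ⟨h, h2⟩)
              · by_cases hlt : (π.c ⟨i, Nat.lt_of_succ_lt h1⟩).val < (π.c j0).val
                · exact Or.inl hlt
                · exact Or.inr ⟨by omega, by
                    have hA0' : ¬ ((π.σ ⟨i, Nat.lt_of_succ_lt h1⟩ : Fin n) : ℕ) = 0 := hA0
                    omega⟩
              · omega
            · rintro (h | ⟨h, h2⟩)
              · exact Or.inl (by omega)
              · exact Or.inl (by omega)
          · have hA0 : ¬ ((π.σ ⟨i, Nat.lt_of_succ_lt h1⟩ : Fin n) : ℕ) = 0 := by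
              rw [hkey' i (Nat.lt_of_succ_lt h1)]; omega
            have hB0 : ¬ ((π.σ ⟨i + 1, h1⟩ : Fin n) : ℕ) = 0 := by
              rw [hkey' (i + 1) h1]; omega
            simp only [if_neg hA0, if_neg hB0]
            refine if_congr ?_ rfl rfl
            constructor
            · rintro (h | ⟨h, h2⟩)
              · exact Or.inl h
              · exact Or.inr ⟨h, by omega⟩
            · rintro (h | ⟨h, h2⟩)
              · exact Or.inl h
              · exact Or.inr ⟨h, by omega⟩
      · rw [dif_neg h1, dif_neg h1]
    simp only [majmn, hG]
    omega


end GenPerm
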